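/- Let α be a weak composition with α_i = 0, and let β satisfy α ⊴ β ⊴ qshift(α) in dominance order. Define γ by γ_i = β_i + β_{i+1}, γ_{i+1} = 0, and γ_j = β_j for j ∉ {i, i+1}. Then s̃_i(α) ⊴ γ ⊴ qshift(s̃_i(α)). -/

import Mathlib

open scoped Classical in
/-- The fundamental shift of a weak composition `v`: working right to left, any
positive entry `a` of `v` with a `0` immediately to its left is reduced to `1`,
and the remaining `a − 1` is shifted left so as to sit immediately to the right
of the next nonzero entry to its left (or into position `1` if there is none);
positive entries with a nonzero entry immediately to the left are unchanged,
and all other entries are `0`. -/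
noncomputable def qshift (n : ℕ) (v : Fin n → ℕ) : Fin n → ℕ := fun p =>
  if v p ≠ 0 then
    (if (p : ℕ) = 0 ∨ v ⟨(p : ℕ) - 1, by omega⟩ ≠ 0 then v p else 1)
  else
    if (p : ℕ) = 0 ∨ v ⟨(p : ℕ) - 1, by omega⟩ ≠ 0 then
      (if h : (Finset.univ.filter fun q : Fin n => p < q ∧ v q ≠ 0).Nonempty then
        v ((Finset.univ.filter fun q : Fin n => p < q ∧ v q ≠ 0).min' h) - 1
      else 0)
    else 0

/-- Dominance order on weak compositions of length `n`: `Dom n β γ` means every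
partial sum of `β` is at most the corresponding partial sum of `γ`
(i.e. `β ⊴ γ`). -/
def Dom (n : ℕ) (β γ : Fin n → ℕ) : Prop :=
  ∀ j : Fin n, ∑ p ∈ Finset.univ.filter (· ≤ j), β p
    ≤ ∑ p ∈ Finset.univ.filter (· ≤ j), γ p

open scoped Classical in
/-- The "tail value" used in `qshift`: `v_(m) - 1` where `m` is the first
nonzero position strictly after `p`, or `0` if there is none. -/
noncomputable def tailval (n : ℕ) (v : Fin n → ℕ) (p : Fin n) : ℕ :=
  if h : (Finset.univ.filter fun q : Fin n => p < q ∧ v q ≠ 0).Nonempty then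
    v ((Finset.univ.filter fun q : Fin n => p < q ∧ v q ≠ 0).min' h) - 1
  else 0

open scoped Classical in
lemma qshift_apply (n : ℕ) (v : Fin n → ℕ) (p : Fin n) :
    qshift n v p = if v p ≠ 0 then
      (if (p : ℕ) = 0 ∨ v ⟨(p : ℕ) - 1, by omega⟩ ≠ 0 then v p else 1)
    else if (p : ℕ) = 0 ∨ v ⟨(p : ℕ) - 1, by omega⟩ ≠ 0 then tailval n v p else 0 := rfl

/-- `extra n v p` is the correction term in the prefix-sum formula for `qshift`. -/
noncomputable def extra (n : ℕ) (v : Fin n → ℕ) (p : Fin n) : ℕ :=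
  if v p = 0 then tailval n v p else 0

/-- Prefix sums. -/
def Pre (n : ℕ) (f : Fin n → ℕ) (j : Fin n) : ℕ := ∑ p ∈ Finset.univ.filter (· ≤ j), f p

lemma Pre_zero (n : ℕ) (f : Fin n → ℕ) (h0 : 0 < n) :
    Pre n f ⟨0, h0⟩ = f ⟨0, h0⟩ := by
  unfold Pre
  have h : Finset.univ.filter (· ≤ (⟨0, h0⟩ : Fin n)) = {(⟨0, h0⟩ : Fin n)} := by
    ext p
    simp [Fin.le_def, Fin.ext_iff]
  rw [h, Finset.sum_singleton]

lemma Pre_succ (n : ℕ) (f : Fin n → ℕ) (m : ℕ) (hm1 : m < n) (hm : m + 1 < n) :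
    Pre n f ⟨m + 1, hm⟩ = Pre n f ⟨m, hm1⟩ + f ⟨m + 1, hm⟩ := by
  unfold Pre
  have h : Finset.univ.filter (· ≤ (⟨m + 1, hm⟩ : Fin n))
      = insert (⟨m + 1, hm⟩ : Fin n) (Finset.univ.filter (· ≤ (⟨m, hm1⟩ : Fin n))) := by
    ext p
    simp only [Finset.mem_filter, Finset.mem_univ, true_and, Finset.mem_insert, Fin.le_def,
      Fin.ext_iff]
    omega
  rw [h, Finset.sum_insert (by simp [Fin.le_def])]
  ring

lemma Pre_congr (n : ℕ) (f g : Fin n → ℕ) (j : Fin n) (h : ∀ p, p ≤ j → f p = g p) :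
    Pre n f j = Pre n g j := by
  unfold Pre
  exact Finset.sum_congr rfl fun p hp => h p (by simpa using hp)

lemma tailval_congr (n : ℕ) (v w : Fin n → ℕ) (j : Fin n) (h : ∀ q, j < q → v q = w q) :
    tailval n v j = tailval n w j := by
  have hs : (Finset.univ.filter fun q : Fin n => j < q ∧ v q ≠ 0)
      = (Finset.univ.filter fun q : Fin n => j < q ∧ w q ≠ 0) := by
    apply Finset.filter_congr
    intro q _
    constructor
    · rintro ⟨h1, h2⟩; exact ⟨h1, by rw [← h q h1]; exact h2⟩
    · rintro ⟨h1, h2⟩; exact ⟨h1, by rw [h q h1]; exact h2⟩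
  unfold tailval
  rw [hs]
  by_cases hne : (Finset.univ.filter fun q : Fin n => j < q ∧ w q ≠ 0).Nonempty
  · rw [dif_pos hne, dif_pos hne]
    have hmem := Finset.min'_mem _ hne
    simp only [Finset.mem_filter] at hmem
    rw [h _ hmem.2.1]
  · rw [dif_neg hne, dif_neg hne]

lemma tailval_succ (n : ℕ) (v : Fin n → ℕ) (m : ℕ) (hm : m + 1 < n) :
    tailval n v ⟨m, Nat.lt_of_succ_lt hm⟩ =
      if v ⟨m + 1, hm⟩ ≠ 0 then v ⟨m + 1, hm⟩ - 1 else tailval n v ⟨m + 1, hm⟩ := by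
  by_cases h1 : v ⟨m + 1, hm⟩ = 0
  · rw [if_neg (by simpa using h1)]
    have hs : (Finset.univ.filter fun q : Fin n => (⟨m, by omega⟩ : Fin n) < q ∧ v q ≠ 0)
        = (Finset.univ.filter fun q : Fin n => (⟨m + 1, hm⟩ : Fin n) < q ∧ v q ≠ 0) := by
      apply Finset.filter_congr
      intro q _
      simp only [Fin.lt_def]
      constructor
      · rintro ⟨hq1, hq2⟩
        refine ⟨?_, hq2⟩
        rcases Nat.lt_or_ge (m + 1) (q : ℕ) with h | h
        · exact h
        · exfalso; have : (q : ℕ) = m + 1 := by omega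
          exact hq2 (by rw [show q = ⟨m + 1, hm⟩ from Fin.ext this]; exact h1)
      · rintro ⟨hq1, hq2⟩; exact ⟨by omega, hq2⟩
    unfold tailval
    rw [hs]
  · rw [if_pos (by simpa using h1)]
    have hmem : (⟨m + 1, hm⟩ : Fin n) ∈
        (Finset.univ.filter fun q : Fin n => (⟨m, by omega⟩ : Fin n) < q ∧ v q ≠ 0) := by
      simp [Fin.lt_def, h1]
    have hne : (Finset.univ.filter fun q : Fin n =>
        (⟨m, by omega⟩ : Fin n) < q ∧ v q ≠ 0).Nonempty := ⟨_, hmem⟩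
    have hmin : (Finset.univ.filter fun q : Fin n =>
        (⟨m, by omega⟩ : Fin n) < q ∧ v q ≠ 0).min' hne = ⟨m + 1, hm⟩ := by
      apply le_antisymm (Finset.min'_le _ _ hmem)
      apply Finset.le_min'
      intro q hq
      simp only [Finset.mem_filter, Fin.lt_def] at hq
      exact Fin.mk_le_of_le_val (by omega)
    unfold tailval
    rw [dif_pos hne, hmin]

lemma qshift_sum (n : ℕ) (v : Fin n → ℕ) :
    ∀ k (hk : k < n), Pre n (qshift n v) ⟨k, hk⟩ = Pre n v ⟨k, hk⟩ + extra n v ⟨k, hk⟩ := by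
  intro k
  induction k with
  | zero =>
    intro hk
    rw [Pre_zero, Pre_zero, qshift_apply, extra]
    by_cases h : v ⟨0, hk⟩ = 0
    · rw [if_neg (by simpa using h), if_pos (Or.inl rfl), if_pos h, h, zero_add]
    · rw [if_pos (by simpa using h), if_pos (Or.inl rfl), if_neg h]
      omega
  | succ m ih =>
    intro hk
    have hm : m < n := by omega
    rw [Pre_succ n _ m hm hk, Pre_succ n v m hm hk, ih hm, qshift_apply]
    have hc : ((⟨m + 1, hk⟩ : Fin n) : ℕ) = 0 ∨ v ⟨((⟨m + 1, hk⟩ : Fin n) : ℕ) - 1, by omega⟩ ≠ 0 ↔ v ⟨m, hm⟩ ≠ 0 := by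
      constructor
      · rintro (h | h)
        · simp at h
        · exact h
      · intro h; exact Or.inr h
    by_cases h1 : v ⟨m + 1, hk⟩ = 0
    · rw [if_neg (by simpa using h1)]
      rw [if_congr hc rfl rfl]
      by_cases h2 : v ⟨m, hm⟩ = 0
      · rw [if_neg (by simpa using h2)]
        have he1 : extra n v ⟨m, hm⟩ = tailval n v ⟨m, hm⟩ := if_pos h2
        have he2 : extra n v ⟨m + 1, hk⟩ = tailval n v ⟨m + 1, hk⟩ := if_pos h1
        have ht : tailval n v ⟨m, hm⟩ = tailval n v ⟨m + 1, hk⟩ := by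
          rw [tailval_succ n v m hk, if_neg (by simpa using h1)]
        rw [he1, he2, ht, h1]
        omega
      · rw [if_pos h2]
        have he1 : extra n v ⟨m, hm⟩ = 0 := if_neg h2
        have he2 : extra n v ⟨m + 1, hk⟩ = tailval n v ⟨m + 1, hk⟩ := if_pos h1
        rw [he1, he2, h1]
    · rw [if_pos (by simpa using h1)]
      rw [if_congr hc rfl rfl]
      by_cases h2 : v ⟨m, hm⟩ = 0
      · rw [if_neg (by simpa using h2)]
        have he1 : extra n v ⟨m, hm⟩ = tailval n v ⟨m, hm⟩ := if_pos h2
        have he2 : extra n v ⟨m + 1, hk⟩ = 0 := if_neg h1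
        have ht : tailval n v ⟨m, hm⟩ = v ⟨m + 1, hk⟩ - 1 := by
          rw [tailval_succ n v m hk, if_pos (by simpa using h1)]
        rw [he1, he2, ht]
        omega
      · rw [if_pos h2]
        have he1 : extra n v ⟨m, hm⟩ = 0 := if_neg h2
        have he2 : extra n v ⟨m + 1, hk⟩ = 0 := if_neg h1
        rw [he1, he2]
        omega

lemma Pre_eq_from (n : ℕ) (f g : Fin n → ℕ) (i0 : ℕ) (hi0 : i0 < n)
    (hbase : Pre n f ⟨i0, hi0⟩ = Pre n g ⟨i0, hi0⟩)
    (hstep : ∀ p : Fin n, i0 < (p : ℕ) → f p = g p) :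
    ∀ k (hk : k < n), i0 ≤ k → Pre n f ⟨k, hk⟩ = Pre n g ⟨k, hk⟩ := by
  intro k
  induction k with
  | zero =>
    intro hk h
    have h0 : i0 = 0 := by omega
    subst h0
    exact hbase
  | succ m ih =>
    intro hk h
    rcases Nat.lt_or_ge i0 (m + 1) with h' | h'
    · rw [Pre_succ n f m (by omega) hk, Pre_succ n g m (by omega) hk,
        ih (by omega) (by omega), hstep ⟨m + 1, hk⟩ (by simpa using h')]
    · have h0 : i0 = m + 1 := by omega
      subst h0
      exact hbase

lemma lemma_G (n i : ℕ) (hi : i + 1 < n) (pf : i < n) (α β α' γ : Fin n → ℕ)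
    (h0 : α ⟨i, pf⟩ = 0)
    (ha1 : α' ⟨i, pf⟩ = α ⟨i + 1, hi⟩) (ha2 : α' ⟨i + 1, hi⟩ = 0)
    (ha3 : ∀ p : Fin n, (p : ℕ) ≠ i → (p : ℕ) ≠ i + 1 → α' p = α p)
    (hg1 : γ ⟨i, pf⟩ = β ⟨i, pf⟩ + β ⟨i + 1, hi⟩) (hg2 : γ ⟨i + 1, hi⟩ = 0)
    (hg3 : ∀ p : Fin n, (p : ℕ) ≠ i → (p : ℕ) ≠ i + 1 → γ p = β p)
    (h1 : Dom n α β) (h2 : Dom n β (qshift n α)) :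
    Dom n α' γ ∧ Dom n γ (qshift n α') := by
  -- low prefix equalities
  have hAlow : ∀ k (hk : k < n), k < i → Pre n α' ⟨k, hk⟩ = Pre n α ⟨k, hk⟩ := by
    intro k hk hki
    apply Pre_congr
    intro p hp
    have hpv : (p : ℕ) ≤ k := hp
    exact ha3 p (by omega) (by omega)
  have hGlow : ∀ k (hk : k < n), k < i → Pre n γ ⟨k, hk⟩ = Pre n β ⟨k, hk⟩ := by
    intro k hk hki
    apply Pre_congr
    intro p hp
    have hpv : (p : ℕ) ≤ k := hp
    exact hg3 p (by omega) (by omega)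
  -- prefix at i
  have hPA'i : Pre n α' ⟨i, pf⟩ = Pre n α ⟨i + 1, hi⟩ := by
    rw [Pre_succ n α i pf hi]
    rcases Nat.eq_zero_or_pos i with h | h
    · subst h
      rw [Pre_zero n α' pf, Pre_zero n α pf, ha1, h0]
      omega
    · obtain ⟨m, rfl⟩ : ∃ m, i = m + 1 := ⟨i - 1, by omega⟩
      rw [Pre_succ n α' m (by omega) pf, Pre_succ n α m (by omega) pf,
        hAlow m (by omega) (by omega), ha1, h0]
      omega
  have hPγi : Pre n γ ⟨i, pf⟩ = Pre n β ⟨i + 1, hi⟩ := by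
    rw [Pre_succ n β i pf hi]
    rcases Nat.eq_zero_or_pos i with h | h
    · subst h
      rw [Pre_zero n γ pf, Pre_zero n β pf, hg1]
    · obtain ⟨m, rfl⟩ : ∃ m, i = m + 1 := ⟨i - 1, by omega⟩
      rw [Pre_succ n γ m (by omega) pf, Pre_succ n β m (by omega) pf,
        hGlow m (by omega) (by omega), hg1]
      omega
  -- high prefix equalities
  have hAhigh : ∀ k (hk : k < n), i + 1 ≤ k → Pre n α' ⟨k, hk⟩ = Pre n α ⟨k, hk⟩ := by
    apply Pre_eq_from
    · rw [Pre_succ n α' i pf hi, ha2, add_zero, hPA'i]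
    · intro p hp
      exact ha3 p (by omega) (by omega)
  have hGhigh : ∀ k (hk : k < n), i + 1 ≤ k → Pre n γ ⟨k, hk⟩ = Pre n β ⟨k, hk⟩ := by
    apply Pre_eq_from
    · rw [Pre_succ n γ i pf hi, hg2, add_zero, hPγi]
    · intro p hp
      exact hg3 p (by omega) (by omega)
  -- tailval facts
  have htail_high : ∀ j : Fin n, i + 1 ≤ (j : ℕ) → tailval n α' j = tailval n α j := by
    intro j hj
    apply tailval_congr
    intro q hq
    have hq' : (j : ℕ) < (q : ℕ) := hq
    exact ha3 q (by omega) (by omega)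
  have htail_low : ∀ c k (hck : k + c + 1 = i),
      tailval n α' ⟨k, by omega⟩ = tailval n α ⟨k, by omega⟩ := by
    intro c
    induction c with
    | zero =>
      intro k hck
      obtain rfl : i = k + 1 := by omega
      rw [tailval_succ n α' k pf, tailval_succ n α k pf]
      have hαk1 : ¬ (α ⟨k + 1, pf⟩ ≠ 0) := by simpa using h0
      rw [if_neg hαk1]
      have ha1' : α' ⟨k + 1, pf⟩ = α ⟨k + 2, hi⟩ := ha1
      by_cases ha : α ⟨k + 2, hi⟩ = 0
      · have hz0 : ¬ (α' ⟨k + 1, pf⟩ ≠ 0) := by simp [ha1', ha]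
        have hz1 : ¬ (α' ⟨k + 2, hi⟩ ≠ 0) := by simpa using ha2
        have hz2 : ¬ (α ⟨k + 2, hi⟩ ≠ 0) := by simpa using ha
        rw [if_neg hz0, tailval_succ n α' (k + 1) hi,
          tailval_succ n α (k + 1) hi, if_neg hz1, if_neg hz2]
        exact htail_high ⟨k + 2, hi⟩ (by simp)
      · have hz0 : α' ⟨k + 1, pf⟩ ≠ 0 := by rw [ha1']; exact ha
        have hz2 : α ⟨k + 2, hi⟩ ≠ 0 := ha
        rw [if_pos hz0, ha1', tailval_succ n α (k + 1) hi, if_pos hz2]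
    | succ c ih =>
      intro k hck
      have hk1 : k + 1 < n := by omega
      rw [tailval_succ n α' k hk1, tailval_succ n α k hk1,
        ha3 ⟨k + 1, hk1⟩ (by simp; omega) (by simp; omega)]
      by_cases ha : α ⟨k + 1, hk1⟩ = 0
      · have hz : ¬ (α ⟨k + 1, hk1⟩ ≠ 0) := by simpa using ha
        rw [if_neg hz, if_neg hz]
        exact ih (k + 1) (by omega)
      · have hz : α ⟨k + 1, hk1⟩ ≠ 0 := ha
        rw [if_pos hz, if_pos hz]
  -- extra facts
  have hX1 : ∀ k (hk : k < n), k < i → extra n α' ⟨k, hk⟩ = extra n α ⟨k, hk⟩ := by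
    intro k hk hki
    unfold extra
    rw [ha3 ⟨k, hk⟩ (by simp; omega) (by simp; omega)]
    rw [htail_low (i - 1 - k) k (by omega)]
  have hX2 : extra n α' ⟨i, pf⟩ = extra n α ⟨i + 1, hi⟩ := by
    unfold extra
    by_cases ha : α ⟨i + 1, hi⟩ = 0
    · have hz0 : α' ⟨i, pf⟩ = 0 := by rw [ha1]; exact ha
      have hz1 : ¬ (α' ⟨i + 1, hi⟩ ≠ 0) := by simpa using ha2
      rw [if_pos hz0, if_pos ha, tailval_succ n α' i hi, if_neg hz1]
      exact htail_high ⟨i + 1, hi⟩ (by simp)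
    · have hz0 : ¬ α' ⟨i, pf⟩ = 0 := by rw [ha1]; exact ha
      rw [if_neg hz0, if_neg ha]
  have hX3 : extra n α ⟨i + 1, hi⟩ ≤ extra n α' ⟨i + 1, hi⟩ := by
    unfold extra
    by_cases ha : α ⟨i + 1, hi⟩ = 0
    · rw [if_pos ha, if_pos ha2]
      exact le_of_eq (htail_high ⟨i + 1, hi⟩ (by simp)).symm
    · rw [if_neg ha]
      exact Nat.zero_le _
  have hX4 : ∀ k (hk : k < n), i + 2 ≤ k → extra n α' ⟨k, hk⟩ = extra n α ⟨k, hk⟩ := by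
    intro k hk hki
    unfold extra
    rw [ha3 ⟨k, hk⟩ (by simp; omega) (by simp; omega),
      htail_high ⟨k, hk⟩ (by simp; omega)]
  constructor
  · intro j
    show Pre n α' j ≤ Pre n γ j
    obtain ⟨jv, hj⟩ := j
    rcases Nat.lt_or_ge jv i with hc | hc
    · rw [hAlow jv hj hc, hGlow jv hj hc]
      exact h1 ⟨jv, hj⟩
    rcases Nat.eq_or_lt_of_le hc with hc' | hc'
    · subst hc'
      calc Pre n α' ⟨i, hj⟩ = Pre n α ⟨i + 1, hi⟩ := hPA'i
        _ ≤ Pre n β ⟨i + 1, hi⟩ := h1 ⟨i + 1, hi⟩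
        _ = Pre n γ ⟨i, hj⟩ := hPγi.symm
    · rw [hAhigh jv hj (by omega), hGhigh jv hj (by omega)]
      exact h1 ⟨jv, hj⟩
  · intro j
    show Pre n γ j ≤ Pre n (qshift n α') j
    obtain ⟨jv, hj⟩ := j
    rcases Nat.lt_or_ge jv i with hc | hc
    · calc Pre n γ ⟨jv, hj⟩ = Pre n β ⟨jv, hj⟩ := hGlow jv hj hc
        _ ≤ Pre n (qshift n α) ⟨jv, hj⟩ := h2 ⟨jv, hj⟩
        _ = Pre n α ⟨jv, hj⟩ + extra n α ⟨jv, hj⟩ := qshift_sum n α jv hj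
        _ = Pre n α' ⟨jv, hj⟩ + extra n α' ⟨jv, hj⟩ := by
            rw [hAlow jv hj hc, hX1 jv hj hc]
        _ = Pre n (qshift n α') ⟨jv, hj⟩ := (qshift_sum n α' jv hj).symm
    rcases Nat.eq_or_lt_of_le hc with hc' | hc'
    · subst hc'
      calc Pre n γ ⟨i, hj⟩ = Pre n β ⟨i + 1, hi⟩ := hPγi
        _ ≤ Pre n (qshift n α) ⟨i + 1, hi⟩ := h2 ⟨i + 1, hi⟩
        _ = Pre n α ⟨i + 1, hi⟩ + extra n α ⟨i + 1, hi⟩ := qshift_sum n α (i + 1) hi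
        _ = Pre n α' ⟨i, hj⟩ + extra n α' ⟨i, hj⟩ := by rw [← hPA'i, ← hX2]
        _ = Pre n (qshift n α') ⟨i, hj⟩ := (qshift_sum n α' i hj).symm
    rcases Nat.eq_or_lt_of_le hc' with hc'' | hc''
    · subst hc''
      calc Pre n γ ⟨i + 1, hj⟩ = Pre n β ⟨i + 1, hj⟩ := hGhigh (i + 1) hj le_rfl
        _ ≤ Pre n (qshift n α) ⟨i + 1, hj⟩ := h2 ⟨i + 1, hj⟩
        _ = Pre n α ⟨i + 1, hj⟩ + extra n α ⟨i + 1, hj⟩ := qshift_sum n α (i + 1) hj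
        _ ≤ Pre n α' ⟨i + 1, hj⟩ + extra n α' ⟨i + 1, hj⟩ := by
            rw [hAhigh (i + 1) hj le_rfl]
            exact Nat.add_le_add_left hX3 _
        _ = Pre n (qshift n α') ⟨i + 1, hj⟩ := (qshift_sum n α' (i + 1) hj).symm
    · calc Pre n γ ⟨jv, hj⟩ = Pre n β ⟨jv, hj⟩ := hGhigh jv hj (by omega)
        _ ≤ Pre n (qshift n α) ⟨jv, hj⟩ := h2 ⟨jv, hj⟩
        _ = Pre n α ⟨jv, hj⟩ + extra n α ⟨jv, hj⟩ := qshift_sum n α jv hj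
        _ = Pre n α' ⟨jv, hj⟩ + extra n α' ⟨jv, hj⟩ := by
            rw [hAhigh jv hj (by omega), hX4 jv hj (by omega)]
        _ = Pre n (qshift n α') ⟨jv, hj⟩ := (qshift_sum n α' jv hj).symm

/-- Lemma 5 of the paper: let `α` be a weak composition with
`αᵢ = 0`, and `β` with `α ⊴ β ⊴ qshift(α)`.  Define `γ` by `γᵢ = βᵢ + βᵢ₊₁`,
`γᵢ₊₁ = 0`, and `γⱼ = βⱼ` otherwise.  Then `s̃ᵢ(α) ⊴ γ ⊴ qshift(s̃ᵢ(α))`.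
Since `αᵢ = 0`, Hivert's swap `s̃ᵢ(α)` is just `α` with entries `i, i+1`
exchanged. -/
theorem lemma_siqshift1 (n i : ℕ) (hi : i + 1 < n) (α β : Fin n → ℕ)
    (h0 : α ⟨i, by omega⟩ = 0)
    (h1 : Dom n α β) (h2 : Dom n β (qshift n α)) :
    Dom n (α ∘ Equiv.swap (⟨i, by omega⟩ : Fin n) ⟨i + 1, hi⟩)
        (Function.update (Function.update β ⟨i, by omega⟩
          (β ⟨i, by omega⟩ + β ⟨i + 1, hi⟩)) ⟨i + 1, hi⟩ 0) ∧
    Dom n (Function.update (Function.update β ⟨i, by omega⟩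
          (β ⟨i, by omega⟩ + β ⟨i + 1, hi⟩)) ⟨i + 1, hi⟩ 0)
        (qshift n (α ∘ Equiv.swap (⟨i, by omega⟩ : Fin n) ⟨i + 1, hi⟩)) := by
  have hne : (⟨i, by omega⟩ : Fin n) ≠ ⟨i + 1, hi⟩ := by simp [Fin.ext_iff]
  refine lemma_G n i hi (by omega) α β _ _ h0 ?_ ?_ ?_ ?_ ?_ ?_ h1 h2
  · show α (Equiv.swap (⟨i, by omega⟩ : Fin n) ⟨i + 1, hi⟩ ⟨i, by omega⟩) = _
    rw [Equiv.swap_apply_left]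
  · show α (Equiv.swap (⟨i, by omega⟩ : Fin n) ⟨i + 1, hi⟩ ⟨i + 1, hi⟩) = _
    rw [Equiv.swap_apply_right]
    exact h0
  · intro p hp1 hp2
    show α (Equiv.swap (⟨i, by omega⟩ : Fin n) ⟨i + 1, hi⟩ p) = α p
    rw [Equiv.swap_apply_of_ne_of_ne (by simpa [Fin.ext_iff] using hp1)
      (by simpa [Fin.ext_iff] using hp2)]
  · rw [Function.update_of_ne hne, Function.update_self]
  · rw [Function.update_self]
  · intro p hp1 hp2
    have hp1' : p ≠ (⟨i, by omega⟩ : Fin n) := by simpa [Fin.ext_iff] using hp1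
    have hp2' : p ≠ (⟨i + 1, hi⟩ : Fin n) := by simpa [Fin.ext_iff] using hp2
    rw [Function.update_of_ne hp2', Function.update_of_ne hp1']
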